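/- arXiv:1704.07954 — 2 statements merged into one kernel-verified Lean document; each statement's English description precedes it below -/
import Mathlib

section
/- The function $D(z_1, z_2) = \frac{2\sin(\theta/2)}{\max\{\log(1/|z_1|), \log(1/|z_2|)\}} + \left|\log\log\frac{1}{|z_2|} - \log\log\frac{1}{|z_1|}\right|$, where $\theta = |\arg(z_2/z_1)| \in [0,\pi]$, defines a distance function (metric) on the punctured closed disk $E^* = \{z \in \mathbb{C} : 0 < |z| \leq e^{-1}\}$: it is symmetric, nonnegative, vanishes exactly on the diagonal, and satisfies the triangle inequality. -/
open Complex

/-- The distance function `D` on the punctured disk `0 < |z| ≤ e⁻¹`. -/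
noncomputable def D (z₁ z₂ : ℂ) : ℝ :=
  2 * Real.sin (|Complex.arg (z₂ / z₁)| / 2) /
      max (Real.log (1 / ‖z₁‖)) (Real.log (1 / ‖z₂‖)) +
    |Real.log (Real.log (1 / ‖z₂‖)) - Real.log (Real.log (1 / ‖z₁‖))|

lemma abs_exp_mul_I_sub_one (θ : ℝ) :
    ‖Complex.exp (θ * I) - 1‖ = 2 * |Real.sin (θ / 2)| := by
  have h : Complex.exp (θ * I) - 1 = ((Real.cos θ - 1 : ℝ) : ℂ) + (Real.sin θ : ℝ) * I := by
    rw [Complex.exp_mul_I]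
    push_cast
    ring
  rw [h, Complex.norm_add_mul_I, Real.abs_sin_half]
  have hx : (Real.cos θ - 1)^2 + Real.sin θ^2 = 2^2 * ((1 - Real.cos θ)/2) := by
    nlinarith [Real.sin_sq_add_cos_sq θ]
  rw [hx, Real.sqrt_mul (by positivity), Real.sqrt_sq (by norm_num)]

lemma unit_abs {z : ℂ} (h : z ≠ 0) : ‖z / (‖z‖ : ℂ)‖ = 1 := by
  rw [norm_div, Complex.norm_real, Real.norm_eq_abs, _root_.abs_of_nonneg (norm_nonneg z),
    div_self (norm_ne_zero_iff.mpr h)]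

lemma chord_eq {z₁ z₂ : ℂ} (h₁ : z₁ ≠ 0) (h₂ : z₂ ≠ 0) :
    2 * Real.sin (|Complex.arg (z₂ / z₁)| / 2) =
      ‖z₂ / (‖z₂‖ : ℂ) - z₁ / (‖z₁‖ : ℂ)‖ := by
  set w := z₂ / z₁ with hw
  have hwne : w ≠ 0 := div_ne_zero h₂ h₁
  have habs1 : (‖z₁‖ : ℝ) ≠ 0 := norm_ne_zero_iff.mpr h₁
  have habs2 : (‖z₂‖ : ℝ) ≠ 0 := norm_ne_zero_iff.mpr h₂
  have habsw : (‖w‖ : ℝ) ≠ 0 := norm_ne_zero_iff.mpr hwne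
  have key : z₂ / (‖z₂‖ : ℂ) - z₁ / (‖z₁‖ : ℂ)
      = (z₁ / (‖z₁‖ : ℂ)) * (w / (‖w‖ : ℂ) - 1) := by
    have habsww : (‖w‖ : ℂ) = (‖z₂‖ : ℂ) / (‖z₁‖ : ℂ) := by
      rw [hw, norm_div]; push_cast; ring
    rw [habsww, hw]
    have h1 : (‖z₁‖ : ℂ) ≠ 0 := by exact_mod_cast habs1
    have h2 : (‖z₂‖ : ℂ) ≠ 0 := by exact_mod_cast habs2
    field_simp
  have hexp : w / (‖w‖ : ℂ) = Complex.exp (w.arg * I) := by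
    have hcast : (‖w‖ : ℂ) ≠ 0 := by exact_mod_cast habsw
    rw [eq_comm, eq_div_iff hcast, mul_comm]
    exact Complex.norm_mul_exp_arg_mul_I w
  rw [key, norm_mul, unit_abs h₁, one_mul, hexp, abs_exp_mul_I_sub_one]
  have hpi := Complex.abs_arg_le_pi w
  rw [abs_le] at hpi
  obtain ⟨hpi1, hpi2⟩ := hpi
  rcases le_total 0 w.arg with h | h
  · rw [_root_.abs_of_nonneg h, _root_.abs_of_nonneg (Real.sin_nonneg_of_nonneg_of_le_pi
      (by linarith) (by linarith [Real.pi_pos]))]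
  · have hs : 0 ≤ Real.sin (-(w.arg / 2)) :=
      Real.sin_nonneg_of_nonneg_of_le_pi (by linarith) (by linarith [Real.pi_pos])
    rw [Real.sin_neg] at hs
    rw [_root_.abs_of_nonpos h, neg_div, Real.sin_neg, _root_.abs_of_nonpos (by linarith)]

lemma logL_ge_one {z : ℂ} (h0 : 0 < ‖z‖) (h1 : ‖z‖ ≤ Real.exp (-1)) :
    1 ≤ Real.log (1 / ‖z‖) := by
  rw [one_div, Real.log_inv]
  have := Real.log_le_log h0 h1
  rw [Real.log_exp] at this
  linarith

theorem stmt_1 :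
    let E : Set ℂ := {z | 0 < ‖z‖ ∧ ‖z‖ ≤ Real.exp (-1)}
    (∀ z₁ ∈ E, ∀ z₂ ∈ E, D z₁ z₂ = D z₂ z₁) ∧
    (∀ z₁ ∈ E, ∀ z₂ ∈ E, 0 ≤ D z₁ z₂) ∧
    (∀ z₁ ∈ E, ∀ z₂ ∈ E, (D z₁ z₂ = 0 ↔ z₁ = z₂)) ∧
    (∀ z₁ ∈ E, ∀ z₂ ∈ E, ∀ z₃ ∈ E, D z₁ z₂ ≤ D z₁ z₃ + D z₃ z₂) := by
  intro E
  have hne : ∀ z ∈ E, z ≠ 0 := by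
    rintro z ⟨hz, -⟩ rfl
    simp at hz
  have hL : ∀ z ∈ E, 1 ≤ Real.log (1 / ‖z‖) := fun z hz => logL_ge_one hz.1 hz.2
  refine ⟨?_, ?_, ?_, ?_⟩
  · -- symmetry
    intro z₁ hz₁ z₂ hz₂
    unfold D
    have harg : |Complex.arg (z₂ / z₁)| = |Complex.arg (z₁ / z₂)| := by
      rw [← inv_div z₁ z₂, Complex.abs_arg_inv]
    rw [harg, max_comm, abs_sub_comm]
  · -- nonneg
    intro z₁ hz₁ z₂ hz₂
    unfold D
    have hpi := Complex.abs_arg_le_pi (z₂ / z₁)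
    have hs : 0 ≤ Real.sin (|Complex.arg (z₂ / z₁)| / 2) :=
      Real.sin_nonneg_of_nonneg_of_le_pi (by positivity) (by linarith [Real.pi_pos])
    have hm : (0:ℝ) < max (Real.log (1 / ‖z₁‖)) (Real.log (1 / ‖z₂‖)) :=
      lt_of_lt_of_le one_pos (le_max_of_le_left (hL z₁ hz₁))
    have := abs_nonneg (Real.log (Real.log (1 / ‖z₂‖)) -
      Real.log (Real.log (1 / ‖z₁‖)))
    positivity
  · -- diag
    intro z₁ hz₁ z₂ hz₂
    constructor
    · intro h
      unfold D at h
      have hn1 := hne z₁ hz₁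
      have hn2 := hne z₂ hz₂
      have hpi := Complex.abs_arg_le_pi (z₂ / z₁)
      have hs : 0 ≤ Real.sin (|Complex.arg (z₂ / z₁)| / 2) :=
        Real.sin_nonneg_of_nonneg_of_le_pi (by positivity) (by linarith [Real.pi_pos])
      have hm : (0:ℝ) < max (Real.log (1 / ‖z₁‖)) (Real.log (1 / ‖z₂‖)) :=
        lt_of_lt_of_le one_pos (le_max_of_le_left (hL z₁ hz₁))
      have h1 : 2 * Real.sin (|Complex.arg (z₂ / z₁)| / 2) /
          max (Real.log (1 / ‖z₁‖)) (Real.log (1 / ‖z₂‖)) = 0 ∧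
          |Real.log (Real.log (1 / ‖z₂‖)) -
            Real.log (Real.log (1 / ‖z₁‖))| = 0 := by
        constructor <;>
        · have hd : 0 ≤ 2 * Real.sin (|Complex.arg (z₂ / z₁)| / 2) /
              max (Real.log (1 / ‖z₁‖)) (Real.log (1 / ‖z₂‖)) := by
            positivity
          have ha := abs_nonneg (Real.log (Real.log (1 / ‖z₂‖)) -
            Real.log (Real.log (1 / ‖z₁‖)))
          linarith
      obtain ⟨ht1, ht2⟩ := h1
      -- from ht2 : |z₁| = |z₂|
      have hLeq : Real.log (1 / ‖z₂‖) = Real.log (1 / ‖z₁‖) := by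
        have := abs_eq_zero.mp ht2
        have h1 := hL z₁ hz₁
        have h2 := hL z₂ hz₂
        exact Real.log_injOn_pos
          (Set.mem_Ioi.mpr (by linarith : (0:ℝ) < Real.log (1 / ‖z₂‖)))
          (Set.mem_Ioi.mpr (by linarith : (0:ℝ) < Real.log (1 / ‖z₁‖))) (by linarith)
      have habs : ‖z₁‖ = ‖z₂‖ := by
        have ha1 : (0:ℝ) < ‖z₁‖ := hz₁.1
        have ha2 : (0:ℝ) < ‖z₂‖ := hz₂.1
        have h1 : (0:ℝ) < 1 / ‖z₁‖ := by positivity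
        have h2 : (0:ℝ) < 1 / ‖z₂‖ := by positivity
        have h3 := Real.log_injOn_pos (Set.mem_Ioi.mpr h2) (Set.mem_Ioi.mpr h1) hLeq
        field_simp at h3
        linarith
      -- from ht1 : directions equal
      have hnum : 2 * Real.sin (|Complex.arg (z₂ / z₁)| / 2) = 0 := by
        rcases div_eq_zero_iff.mp ht1 with h | h
        · exact h
        · exact absurd h hm.ne'
      rw [chord_eq hn1 hn2] at hnum
      have heq : z₂ / (‖z₂‖ : ℂ) = z₁ / (‖z₁‖ : ℂ) := by
        simpa [sub_eq_zero] using hnum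
      rw [habs] at heq
      have hc : (‖z₂‖ : ℂ) ≠ 0 := by
        exact_mod_cast norm_ne_zero_iff.mpr hn2
      field_simp [hc] at heq
      exact heq.symm
    · rintro rfl
      unfold D
      simp [div_self (hne z₁ hz₁)]
  · -- triangle
    intro z₁ hz₁ z₂ hz₂ z₃ hz₃
    have hn1 := hne z₁ hz₁; have hn2 := hne z₂ hz₂; have hn3 := hne z₃ hz₃
    have hL1 := hL z₁ hz₁; have hL2 := hL z₂ hz₂; have hL3 := hL z₃ hz₃
    unfold D
    rw [chord_eq hn1 hn2, chord_eq hn1 hn3, chord_eq hn3 hn2]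
    set L₁ := Real.log (1 / ‖z₁‖)
    set L₂ := Real.log (1 / ‖z₂‖)
    set L₃ := Real.log (1 / ‖z₃‖)
    set u₁ := z₁ / (‖z₁‖ : ℂ)
    set u₂ := z₂ / (‖z₂‖ : ℂ)
    set u₃ := z₃ / (‖z₃‖ : ℂ)
    set c12 := ‖u₂ - u₁‖ with hc12
    set c13 := ‖u₃ - u₁‖ with hc13
    set c32 := ‖u₂ - u₃‖ with hc32
    have hctri : c12 ≤ c32 + c13 := norm_sub_le_norm_sub_add_norm_sub u₂ u₃ u₁
    have hc12nn : 0 ≤ c12 := norm_nonneg _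
    have hc13nn : 0 ≤ c13 := norm_nonneg _
    have hc32nn : 0 ≤ c32 := norm_nonneg _
    have hc12le : c12 ≤ 2 := by
      have h := norm_sub_le u₂ u₁
      rw [show ‖u₂‖ = 1 from unit_abs hn2,
        show ‖u₁‖ = 1 from unit_abs hn1] at h
      rw [hc12]; linarith
    rcases le_or_gt L₃ (max L₁ L₂) with hcase | hcase
    · -- easy case
      have h13 : max L₁ L₃ ≤ max L₁ L₂ := max_le (le_max_left _ _) hcase
      have h32 : max L₃ L₂ ≤ max L₁ L₂ := max_le hcase (le_max_right _ _)
      have hp13 : (0:ℝ) < max L₁ L₃ := lt_of_lt_of_le one_pos (le_max_left _ _ |>.trans' hL1 |>.trans_eq rfl)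
      have hp13' : (0:ℝ) < max L₁ L₃ := lt_of_lt_of_le one_pos (le_max_of_le_left hL1)
      have hp32 : (0:ℝ) < max L₃ L₂ := lt_of_lt_of_le one_pos (le_max_of_le_left hL3)
      have hp12 : (0:ℝ) < max L₁ L₂ := lt_of_lt_of_le one_pos (le_max_of_le_left hL1)
      have e1 : c13 / max L₁ L₂ ≤ c13 / max L₁ L₃ := by gcongr
      have e2 : c32 / max L₁ L₂ ≤ c32 / max L₃ L₂ := by gcongr
      have e3 : c12 / max L₁ L₂ ≤ c13 / max L₁ L₂ + c32 / max L₁ L₂ := by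
        rw [← add_div]
        gcongr
        linarith
      have habstri := abs_sub_le (Real.log L₂) (Real.log L₃) (Real.log L₁)
      linarith
    · -- hard case : L₃ > max L₁ L₂
      have h3gt1 : L₁ < L₃ := lt_of_le_of_lt (le_max_left _ _) hcase
      have h3gt2 : L₂ < L₃ := lt_of_le_of_lt (le_max_right _ _) hcase
      have h13 : max L₁ L₃ = L₃ := max_eq_right h3gt1.le
      have h32 : max L₃ L₂ = L₃ := max_eq_left h3gt2.le
      rw [h13, h32]
      have hp12 : (0:ℝ) < max L₁ L₂ := lt_of_lt_of_le one_pos (le_max_of_le_left hL1)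
      have hp3 : (0:ℝ) < L₃ := by linarith
      set M := max L₁ L₂ with hM
      have hM1 : 1 ≤ M := le_max_of_le_left hL1
      -- log slack
      have hlog31 : Real.log L₁ ≤ Real.log L₃ := Real.log_le_log (by linarith) h3gt1.le
      have hlog32 : Real.log L₂ ≤ Real.log L₃ := Real.log_le_log (by linarith) h3gt2.le
      have hlogM : Real.log M ≤ Real.log L₃ := by
        rcases le_total L₁ L₂ with h | h
        · rw [hM, max_eq_right h]; exact hlog32
        · rw [hM, max_eq_left h]; exact hlog31
      have hslack : |Real.log L₂ - Real.log L₁| + 2 * (Real.log L₃ - Real.log M) ≤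
          |Real.log L₃ - Real.log L₁| + |Real.log L₂ - Real.log L₃| := by
        rw [_root_.abs_of_nonneg (sub_nonneg.mpr hlog31),
          _root_.abs_of_nonpos (sub_nonpos.mpr hlog32)]
        rcases le_total L₁ L₂ with h | h
        · rw [hM, max_eq_right h, _root_.abs_of_nonneg
            (sub_nonneg.mpr (Real.log_le_log (by linarith) h))]
          linarith
        · rw [hM, max_eq_left h, _root_.abs_of_nonpos
            (sub_nonpos.mpr (Real.log_le_log (by linarith) h))]
          linarith
      -- key estimate
      have hkey : c12 / M - (c13 / L₃ + c32 / L₃) ≤ 2 * (Real.log L₃ - Real.log M) := by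
        have h1 : c12 / M - (c13 / L₃ + c32 / L₃) ≤ c12 / M - c12 / L₃ := by
          have : c12 / L₃ ≤ c13 / L₃ + c32 / L₃ := by
            rw [← add_div]; gcongr; linarith
          linarith
        have h2 : c12 / M - c12 / L₃ = c12 * (1 / M - 1 / L₃) := by ring
        have h3 : (0:ℝ) ≤ 1 / M - 1 / L₃ := by
          rw [sub_nonneg]
          exact one_div_le_one_div_of_le hp12 hcase.le
        have h4 : c12 * (1 / M - 1 / L₃) ≤ 2 * (1 / M - 1 / L₃) := by gcongr
        have h5 : 1 / M - 1 / L₃ ≤ (L₃ - M) / L₃ := by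
          rw [div_sub_div _ _ (by linarith : M ≠ 0) hp3.ne', div_le_div_iff₀ (by positivity) hp3]
          nlinarith [mul_nonneg (mul_nonneg (sub_nonneg.mpr hcase.le) hp3.le)
            (sub_nonneg.mpr hM1)]
        have h6 : (L₃ - M) / L₃ ≤ Real.log L₃ - Real.log M := by
          have := Real.one_sub_inv_le_log_of_pos (show (0:ℝ) < L₃ / M by positivity)
          rw [Real.log_div hp3.ne' (by linarith : M ≠ 0)] at this
          have hinv : (L₃ / M)⁻¹ = M / L₃ := by
            rw [inv_div]
          rw [hinv] at this
          have : 1 - M / L₃ ≤ Real.log L₃ - Real.log M := this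
          have heq : (L₃ - M) / L₃ = 1 - M / L₃ := by field_simp
          linarith
        linarith
      linarith
end

section
/- Let $\tau_1, \tau_2, \tau \geq 1$ with $\tau_2 \leq \tau_1$, and let $\zeta_1, \zeta_2, \zeta$ be complex numbers of modulus $1$. Define $\tilde D((\zeta_a,\tau_a),(\zeta_b,\tau_b)) = \frac{|\zeta_a - \zeta_b|}{\max\{\tau_a,\tau_b\}} + |\log\tau_a - \log\tau_b|$. Then $\tilde D((\zeta_1,\tau_1),(\zeta_2,\tau_2)) \leq \tilde D((\zeta_1,\tau_1),(\zeta,\tau)) + \tilde D((\zeta,\tau),(\zeta_2,\tau_2))$. -/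
/-- `D` in polar-type coordinates: a point is `(ζ, τ)` with `|ζ| = 1`, `τ ≥ 1`. -/
noncomputable def Dtilde (p q : ℂ × ℝ) : ℝ :=
  ‖p.1 - q.1‖ / max p.2 q.2 + |Real.log p.2 - Real.log q.2|

theorem stmt_2 (ζ₁ ζ₂ ζ : ℂ) (τ₁ τ₂ τ : ℝ)
    (hζ₁ : ‖ζ₁‖ = 1) (hζ₂ : ‖ζ₂‖ = 1) (hζ : ‖ζ‖ = 1)
    (hτ₁ : 1 ≤ τ₁) (hτ₂ : 1 ≤ τ₂) (hτ : 1 ≤ τ) (h21 : τ₂ ≤ τ₁) :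
    Dtilde (ζ₁, τ₁) (ζ₂, τ₂) ≤ Dtilde (ζ₁, τ₁) (ζ, τ) + Dtilde (ζ, τ) (ζ₂, τ₂) := by
  have hτ₁0 : (0:ℝ) < τ₁ := by linarith
  have hτ0 : (0:ℝ) < τ := by linarith
  have hτ₂0 : (0:ℝ) < τ₂ := by linarith
  simp only [Dtilde]
  have habs : ‖ζ₁ - ζ₂‖ ≤ ‖ζ₁ - ζ‖ + ‖ζ - ζ₂‖ := by
    simpa using norm_sub_le_norm_sub_add_norm_sub ζ₁ ζ ζ₂
  have hA2 : ‖ζ₁ - ζ₂‖ ≤ 2 := by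
    have := norm_sub_le ζ₁ ζ₂
    simp only [hζ₁, hζ₂] at this
    linarith
  have h1 : max τ₁ τ₂ = τ₁ := max_eq_left h21
  have htri : |Real.log τ₁ - Real.log τ₂| ≤
      |Real.log τ₁ - Real.log τ| + |Real.log τ - Real.log τ₂| := abs_sub_le _ _ _
  rcases le_or_gt τ τ₁ with hle | hlt
  · have h2 : max τ₁ τ = τ₁ := max_eq_left hle
    have h3 : max τ τ₂ ≤ τ₁ := max_le hle h21
    have hmax0 : (0:ℝ) < max τ τ₂ := lt_max_of_lt_left hτ0
    rw [h1, h2]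
    have hdiv : ‖ζ₁ - ζ₂‖ / τ₁ ≤
        ‖ζ₁ - ζ‖ / τ₁ + ‖ζ - ζ₂‖ / max τ τ₂ := by
      have : ‖ζ - ζ₂‖ / τ₁ ≤ ‖ζ - ζ₂‖ / max τ τ₂ := by
        gcongr
      calc ‖ζ₁ - ζ₂‖ / τ₁
          ≤ (‖ζ₁ - ζ‖ + ‖ζ - ζ₂‖) / τ₁ := by gcongr
        _ = ‖ζ₁ - ζ‖ / τ₁ + ‖ζ - ζ₂‖ / τ₁ := add_div _ _ _
        _ ≤ _ := by linarith
    linarith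
  · have h2 : max τ₁ τ = τ := max_eq_right hlt.le
    have h3 : max τ τ₂ = τ := max_eq_left (h21.trans hlt.le)
    rw [h1, h2, h3]
    have hlog1 : Real.log τ₂ ≤ Real.log τ₁ := Real.log_le_log hτ₂0 h21
    have hlog2 : Real.log τ₁ ≤ Real.log τ := Real.log_le_log hτ₁0 hlt.le
    have hkey : 1 - τ₁ / τ ≤ Real.log τ - Real.log τ₁ := by
      have := Real.log_le_sub_one_of_pos (x := τ₁ / τ) (by positivity)
      rw [Real.log_div hτ₁0.ne' hτ0.ne'] at this
      linarith
    rw [abs_of_nonneg (by linarith), abs_of_nonpos (by linarith),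
      abs_of_nonneg (by linarith)]
    -- need: A/τ₁ ≤ (B+C)/τ + 2(log τ - log τ₁) with A ≤ B+C, A ≤ 2
    have hBC : ‖ζ₁ - ζ₂‖ / τ ≤
        ‖ζ₁ - ζ‖ / τ + ‖ζ - ζ₂‖ / τ := by
      rw [← add_div]; gcongr
    have hslack : ‖ζ₁ - ζ₂‖ / τ₁ - ‖ζ₁ - ζ₂‖ / τ ≤
        2 * (Real.log τ - Real.log τ₁) := by
      have hA0 : 0 ≤ ‖ζ₁ - ζ₂‖ := norm_nonneg _
      have e1 : ‖ζ₁ - ζ₂‖ / τ₁ - ‖ζ₁ - ζ₂‖ / τ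
          = ‖ζ₁ - ζ₂‖ * ((τ - τ₁) / (τ₁ * τ)) := by
        field_simp
      rw [e1]
      have hx0 : (0:ℝ) ≤ (τ - τ₁) / (τ₁ * τ) := by
        apply div_nonneg <;> nlinarith
      have hxy : (τ - τ₁) / (τ₁ * τ) ≤ (τ - τ₁) / τ := by
        gcongr
        · nlinarith
      have h4 : ‖ζ₁ - ζ₂‖ * ((τ - τ₁) / (τ₁ * τ)) ≤ 2 * ((τ - τ₁) / τ) := by
        calc ‖ζ₁ - ζ₂‖ * ((τ - τ₁) / (τ₁ * τ)) ≤ 2 * ((τ - τ₁) / (τ₁ * τ)) := by gcongr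
          _ ≤ 2 * ((τ - τ₁) / τ) := by linarith
      have h5 : (τ - τ₁) / τ ≤ Real.log τ - Real.log τ₁ := by
        rw [sub_div, div_self hτ0.ne']
        linarith
      linarith
    linarith
end
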